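/- Let Σ be a finite nonempty alphabet and let L ⊆ ℬ^Σ be a regular tree language. Then L has asymptotic density 1 (i.e. P_lim(L) = 1) if and only if there exists a tree S ∈ ℬ^Σ such that every tree T with S ⪯ T satisfies T ∈ L. -/

import Mathlib

open Filter Topology

namespace Sparse

inductive BTree (α : Type*) where
  | nil : BTree α
  | node : α → BTree α → BTree α → BTree α

namespace BTree

variable {α : Type*}

/-- The number of nodes of a binary tree. -/
def size : BTree α → ℕ
  | nil => 0
  | node _ l r => size l + size r + 1

/-- `Subtree S T` means `S = T`, or `T` is nonempty and `S` is a subtree of the left or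
right subtree of the root of `T`. -/
inductive Subtree : BTree α → BTree α → Prop where
  | refl (T : BTree α) : Subtree T T
  | left {S l r : BTree α} {a : α} : Subtree S l → Subtree S (node a l r)
  | right {S l r : BTree α} {a : α} : Subtree S r → Subtree S (node a l r)

end BTree

variable {α : Type*}

/-- A run of a tree automaton with transition relation `Δ` on a binary tree: the empty tree is
assigned `none` (i.e. `⊥`), and a nonempty tree with root label `a` and run values `ql`, `qr` on
the two subtrees is assigned a state `q` with `(ql, qr, a, q) ∈ Δ`. -/
inductive Run {Q : Type*} (Δ : Option Q → Option Q → α → Q → Prop) :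
    BTree α → Option Q → Prop where
  | nil : Run Δ BTree.nil none
  | node {a : α} {l r : BTree α} {ql qr : Option Q} {q : Q} :
      Run Δ l ql → Run Δ r qr → Δ ql qr a q → Run Δ (BTree.node a l r) (some q)

/-- A tree automaton with transitions `Δ` and accepting states `F` accepts `T` if some run
assigns `T` a state in `F`. -/
def TAccepts {Q : Type*} (Δ : Option Q → Option Q → α → Q → Prop) (F : Set Q)
    (T : BTree α) : Prop :=
  ∃ q ∈ F, Run Δ T (some q)

/-- A tree language is regular iff it is the set of trees accepted by some tree automaton
with finitely many states. -/
def RegularTreeLang (L : Set (BTree α)) : Prop :=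
  ∃ (Q : Type) (_ : Fintype Q) (Δ : Option Q → Option Q → α → Q → Prop) (F : Set Q),
    L = {T | TAccepts Δ F T}

/-- The relative number of `n`-node trees in `L`:
`|L ∩ ℬ^Σ_n| / (C_n ⬝ |Σ|^n)`, where `C_n` is the `n`-th Catalan number. -/
noncomputable def density [Fintype α] (L : Set (BTree α)) (n : ℕ) : ℝ :=
  (Nat.card {T : BTree α // T ∈ L ∧ T.size = n} : ℝ) /
    ((catalan n : ℝ) * (Fintype.card α : ℝ) ^ n)

/-- `L` has asymptotic density `c` if `density L n` tends to `c` as `n → ∞`. -/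
def HasDensity [Fintype α] (L : Set (BTree α)) (c : ℝ) : Prop :=
  Tendsto (density L) atTop (𝓝 c)

/-- The upper asymptotic density `P̄_lim(L) = limsup_n density L n`. -/
noncomputable def upperDensity [Fintype α] (L : Set (BTree α)) : ℝ :=
  limsup (density L) atTop

/-- `LT = {conc_a(S, T) : a ∈ Σ, S ∈ L}`. -/
def concL (L : Set (BTree α)) (T : BTree α) : Set (BTree α) :=
  {X | ∃ (a : α) (S : BTree α), S ∈ L ∧ X = BTree.node a S T}

/-- `LT⁻¹ = {S : ∃ a, conc_a(S, T) ∈ L}`. -/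
def quotR (L : Set (BTree α)) (T : BTree α) : Set (BTree α) :=
  {S | ∃ a : α, BTree.node a S T ∈ L}

/-- `T⁻¹L = {S : ∃ a, conc_a(T, S) ∈ L}`. -/
def quotL (T : BTree α) (L : Set (BTree α)) : Set (BTree α) :=
  {S | ∃ a : α, BTree.node a T S ∈ L}

/-- `L[T_k, …, T_1]⁻¹`, where the list is `[T_k, …, T_1]` (so the head is `T_k`):
`L[]⁻¹ = L` and `L[T_k,…,T_1]⁻¹ = (L[T_{k-1},…,T_1]⁻¹)T_k⁻¹ ∪ T_k⁻¹(L[T_{k-1},…,T_1]⁻¹)`. -/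
def quotIter (L : Set (BTree α)) : List (BTree α) → Set (BTree α)
  | [] => L
  | T :: Ts => quotR (quotIter L Ts) T ∪ quotL T (quotIter L Ts)

/-- A state `q` is reachable if some run of the automaton on some tree assigns `q` to the tree. -/
def TReachable {Q : Type*} (Δ : Option Q → Option Q → α → Q → Prop) (q : Q) : Prop :=
  ∃ T : BTree α, Run Δ T (some q)

/-- A set of states `V` is a sink if every transition involving a state of `V` as one of the
two child values leads into `V`. -/
def Sink {Q : Type*} (Δ : Option Q → Option Q → α → Q → Prop) (V : Set Q) : Prop :=
  ∀ q ∈ V, ∀ (q' : Option Q) (a : α) (q'' : Q),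
    (Δ (some q) q' a q'' ∨ Δ q' (some q) a q'') → q'' ∈ V

/-- Trees of size `n` satisfying `P`. -/
@[reducible] def SzP (P : BTree α → Prop) (n : ℕ) := {T : BTree α // P T ∧ T.size = n}

def nodeMap (P : BTree α → Prop)
    (hP : ∀ a l r, P (BTree.node a l r) → P l ∧ P r) (n : ℕ) :
    SzP P (n+1) → α × Σ k : Fin (n+1), SzP P k × SzP P (n - k) :=
  fun x => match x with
  | ⟨.nil, h⟩ => absurd h.2 (by simp [BTree.size])
  | ⟨.node a l r, h⟩ =>
      ⟨a, ⟨⟨l.size, by have := h.2; simp [BTree.size] at this; omega⟩,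
        ⟨l, (hP a l r h.1).1, rfl⟩,
        ⟨r, (hP a l r h.1).2, show r.size = n - l.size by
          have := h.2; simp [BTree.size] at this; omega⟩⟩⟩

lemma nodeMap_injective (P : BTree α → Prop) (hP : ∀ a l r, P (BTree.node a l r) → P l ∧ P r)
    (n : ℕ) : Function.Injective (nodeMap P hP n) := by
  rintro ⟨T, hT⟩ ⟨T', hT'⟩ h
  cases T with
  | nil => exact absurd hT.2 (by simp [BTree.size])
  | node a l r =>
    cases T' with
    | nil => exact absurd hT'.2 (by simp [BTree.size])
    | node a' l' r' =>
      have h' := congrArg (fun x : α × Σ k : Fin (n+1), SzP P k × SzP P (n - k) =>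
        (x.1, x.2.2.1.val, x.2.2.2.val)) h
      simp only [nodeMap] at h'
      obtain ⟨rfl, rfl, rfl⟩ := Prod.mk.injEq .. ▸ h'
      rfl


lemma size_eq_zero {T : BTree α} (h : T.size = 0) : T = BTree.nil := by
  cases T with
  | nil => rfl
  | node a l r => simp [BTree.size] at h

lemma nodeMap_surjective (n : ℕ) :
    Function.Surjective (nodeMap (fun _ : BTree α => True) (fun _ _ _ _ => ⟨trivial, trivial⟩) n) := by
  rintro ⟨a, ⟨k, hk⟩, ⟨l, -, hl⟩, ⟨r, -, hr⟩⟩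
  simp only [Fin.val_mk] at hl hr
  subst hl
  refine ⟨⟨BTree.node a l r, trivial, by simp only [BTree.size]; omega⟩, rfl⟩

lemma finite_sz [Fintype α] : ∀ n : ℕ, Finite (SzP (fun _ : BTree α => True) n) := by
  intro n
  induction n using Nat.strong_induction_on with
  | _ n ih =>
    match n with
    | 0 =>
      have : Subsingleton (SzP (fun _ : BTree α => True) 0) := by
        constructor
        rintro ⟨T, -, hT⟩ ⟨T', -, hT'⟩
        have := size_eq_zero hT; have := size_eq_zero hT'
        subst this; subst this; rfl
      infer_instance
    | (n+1) =>
      haveI : ∀ k : Fin (n+1), Finite (SzP (fun _ : BTree α => True) k ×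
          SzP (fun _ : BTree α => True) (n - k)) := fun k => by
        haveI := ih k (by omega); haveI := ih (n - k) (by omega); infer_instance
      exact Finite.of_injective _ (nodeMap_injective (fun _ : BTree α => True)
        (fun _ _ _ _ => ⟨trivial, trivial⟩) n)

lemma card_sigma_fin {n : ℕ} (f : Fin n → Type*) [∀ i, Finite (f i)] :
    Nat.card (Σ i, f i) = ∑ i, Nat.card (f i) := by
  haveI := fun i => Fintype.ofFinite (f i)
  simp [Nat.card_eq_fintype_card]

lemma card_sz [Fintype α] (n : ℕ) :
    Nat.card (SzP (fun _ : BTree α => True) n) = catalan n * Fintype.card α ^ n := by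
  induction n using Nat.strong_induction_on with
  | _ n ih =>
    match n with
    | 0 =>
      have h1 : Subsingleton (SzP (fun _ : BTree α => True) 0) := by
        constructor
        rintro ⟨T, -, hT⟩ ⟨T', -, hT'⟩
        have h := size_eq_zero hT; have h' := size_eq_zero hT'
        subst h; subst h'; rfl
      have h2 : Nonempty (SzP (fun _ : BTree α => True) 0) := ⟨⟨BTree.nil, trivial, rfl⟩⟩
      simp [Nat.card_unique]
    | (n+1) =>
      haveI : ∀ k : ℕ, Finite (SzP (fun _ : BTree α => True) k) := finite_sz
      have e := Equiv.ofBijective _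
        ⟨nodeMap_injective (fun _ : BTree α => True) (fun _ _ _ _ => ⟨trivial, trivial⟩) n,
         nodeMap_surjective n⟩
      rw [Nat.card_congr e, Nat.card_prod, card_sigma_fin]
      have : ∀ i : Fin (n+1), Nat.card (SzP (fun _ : BTree α => True) i.val ×
          SzP (fun _ : BTree α => True) (n - i.val)) =
          (catalan i.val * catalan (n - i.val)) * Fintype.card α ^ n := by
        intro i
        rw [Nat.card_prod, ih i.val (by omega) , ih (n - i.val) (by omega)]
        have : Fintype.card α ^ i.val * Fintype.card α ^ (n - i.val) = Fintype.card α ^ n := by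
          rw [← pow_add]; congr 1; omega
        calc catalan ↑i * Fintype.card α ^ ↑i * (catalan (n - ↑i) * Fintype.card α ^ (n - ↑i))
            = (catalan ↑i * catalan (n - ↑i)) * (Fintype.card α ^ ↑i * Fintype.card α ^ (n - ↑i)) := by ring
          _ = catalan ↑i * catalan (n - ↑i) * Fintype.card α ^ n := by rw [this]
      rw [Finset.sum_congr rfl (fun i _ => this i), ← Finset.sum_mul, Nat.card_eq_fintype_card]
      rw [show (∑ i : Fin (n+1), catalan i.val * catalan (n - i.val)) = catalan (n+1) from
        (catalan_succ n).symm]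
      ring

lemma finite_szP [Fintype α] (P : BTree α → Prop) (n : ℕ) : Finite (SzP P n) := by
  haveI := finite_sz (α := α) n
  exact Finite.of_injective (fun x : SzP P n => (⟨x.val, trivial, x.2.2⟩ : SzP (fun _ => True) n))
    (by rintro ⟨T, h⟩ ⟨T', h'⟩ e; dsimp only at e; simp only [Subtype.mk.injEq] at e; exact Subtype.ext e)

lemma card_szP_le [Fintype α] (P : BTree α → Prop) (n : ℕ) :
    Nat.card (SzP P n) ≤ catalan n * Fintype.card α ^ n := by
  haveI := finite_sz (α := α) n
  rw [← card_sz (α := α) n]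
  exact Nat.card_le_card_of_injective
    (fun x : SzP P n => (⟨x.val, trivial, x.2.2⟩ : SzP (fun _ => True) n))
    (by rintro ⟨T, h⟩ ⟨T', h'⟩ e; simpa using congrArg Subtype.val e)

lemma card_szP_succ_le [Fintype α] (P : BTree α → Prop)
    (hP : ∀ a l r, P (BTree.node a l r) → P l ∧ P r) (n : ℕ) :
    Nat.card (SzP P (n+1)) ≤
      Fintype.card α * ∑ k : Fin (n+1), Nat.card (SzP P k.val) * Nat.card (SzP P (n - k.val)) := by
  haveI : ∀ m : ℕ, Finite (SzP P m) := finite_szP P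
  calc Nat.card (SzP P (n+1))
      ≤ Nat.card (α × Σ k : Fin (n+1), SzP P k.val × SzP P (n - k.val)) :=
        Nat.card_le_card_of_injective _ (nodeMap_injective P hP n)
    _ = Fintype.card α * ∑ k : Fin (n+1), Nat.card (SzP P k.val) * Nat.card (SzP P (n - k.val)) := by
        rw [Nat.card_prod, card_sigma_fin, Nat.card_eq_fintype_card]
        congr 1
        exact Finset.sum_congr rfl fun i _ => Nat.card_prod _ _

lemma card_split [Fintype α] (L : Set (BTree α)) (n : ℕ) :
    Nat.card (SzP (fun T => T ∈ L) n) + Nat.card (SzP (fun T => T ∉ L) n)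
      = catalan n * Fintype.card α ^ n := by
  classical
  haveI : ∀ (P : BTree α → Prop) (m : ℕ), Finite (SzP P m) := finite_szP
  rw [← card_sz (α := α) n, ← Nat.card_sum]
  refine Nat.card_congr (Equiv.ofBijective
    (fun x => match x with
      | .inl ⟨T, h⟩ => (⟨T, trivial, h.2⟩ : SzP (fun _ => True) n)
      | .inr ⟨T, h⟩ => ⟨T, trivial, h.2⟩) ⟨?_, ?_⟩)
  · rintro (⟨T, h⟩ | ⟨T, h⟩) (⟨T', h'⟩ | ⟨T', h'⟩) e <;>
      [skip; skip; skip; skip] <;>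
      (have e' : T = T' := by dsimp only at e; simpa only [Subtype.mk.injEq] using e) <;> subst e' <;> first
        | exact congrArg _ (Subtype.ext rfl)
        | exact absurd h.1 h'.1
        | exact absurd h'.1 h.1
  · rintro ⟨T, -, hT⟩
    by_cases hTL : T ∈ L
    · exact ⟨.inl ⟨T, hTL, hT⟩, rfl⟩
    · exact ⟨.inr ⟨T, hTL, hT⟩, rfl⟩

section Catalan

lemma catalan_rec (n : ℕ) : (n + 2) * catalan (n+1) = (4*n + 2) * catalan n := by
  have a := succ_mul_catalan_eq_centralBinom (n+1)
  have b := Nat.succ_mul_centralBinom_succ n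
  have c := succ_mul_catalan_eq_centralBinom n
  have key : (n+1) * ((n+2) * catalan (n+1)) = (n+1) * ((4*n + 2) * catalan n) := by
    calc (n+1) * ((n+2) * catalan (n+1)) = (n+1) * Nat.centralBinom (n+1) := by rw [← a]
      _ = 2*(2*n+1) * Nat.centralBinom n := b
      _ = 2*(2*n+1) * ((n+1) * catalan n) := by rw [c]
      _ = (n+1) * ((4*n + 2) * catalan n) := by ring
  exact Nat.eq_of_mul_eq_mul_left (by omega) key

lemma catalan_succ_le (n : ℕ) : catalan (n+1) ≤ 4 * catalan n := by
  have h := catalan_rec n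
  have h2 : (n + 2) * catalan (n+1) ≤ (n + 2) * (4 * catalan n) := by
    rw [h]
    have : (4*n + 2) ≤ 4 * (n + 2) := by omega
    calc (4*n + 2) * catalan n ≤ (4 * (n+2)) * catalan n := Nat.mul_le_mul_right _ this
      _ = (n + 2) * (4 * catalan n) := by ring
  exact Nat.le_of_mul_le_mul_left h2 (by omega)

lemma catalan_add_le (n m : ℕ) : catalan (n + m) ≤ 4^m * catalan n := by
  induction m with
  | zero => simp
  | succ m ih =>
    calc catalan (n + (m+1)) = catalan ((n + m) + 1) := by ring_nf
      _ ≤ 4 * catalan (n + m) := catalan_succ_le _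
      _ ≤ 4 * (4^m * catalan n) := Nat.mul_le_mul_left _ ih
      _ = 4^(m+1) * catalan n := by ring

lemma catalan_pos' (n : ℕ) : 0 < catalan n := by
  rcases Nat.eq_zero_or_pos (catalan n) with h | h
  · exfalso
    have := succ_mul_catalan_eq_centralBinom n
    rw [h, Nat.mul_zero] at this
    exact absurd this.symm (Nat.ne_of_gt n.centralBinom_pos)
  · exact h

end Catalan

section Automaton

variable {Q : Type} (Δ : Option Q → Option Q → α → Q → Prop)

def stat : BTree α → Set (Option Q)
  | .nil => {none}
  | .node a l r => {o | ∃ q : Q, o = some q ∧ ∃ ql ∈ stat l, ∃ qr ∈ stat r, Δ ql qr a q}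

lemma run_iff_stat (T : BTree α) (o : Option Q) : Run Δ T o ↔ o ∈ stat Δ T := by
  constructor
  · intro h
    induction h with
    | nil => exact rfl
    | node hl hr hd ihl ihr => exact ⟨_, rfl, _, ihl, _, ihr, hd⟩
  · intro h
    induction T generalizing o with
    | nil => obtain rfl : o = none := h; exact Run.nil
    | node a l r ihl ihr =>
      obtain ⟨q, rfl, ql, hql, qr, hqr, hd⟩ := h
      exact Run.node (ihl _ hql) (ihr _ hqr) hd

lemma taccepts_iff_stat (F : Set Q) (T : BTree α) :
    TAccepts Δ F T ↔ ∃ q ∈ F, some q ∈ stat Δ T := by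
  unfold TAccepts; simp only [run_iff_stat]

end Automaton

section Ctx

inductive Ctx (α : Type*) where
  | hole : Ctx α
  | nodeL : α → Ctx α → BTree α → Ctx α
  | nodeR : α → BTree α → Ctx α → Ctx α

def fill : Ctx α → BTree α → BTree α
  | .hole, T => T
  | .nodeL a c r, T => .node a (fill c T) r
  | .nodeR a l c, T => .node a l (fill c T)

def csize : Ctx α → ℕ
  | .hole => 0
  | .nodeL a c r => csize c + r.size + 1
  | .nodeR a l c => csize c + l.size + 1

lemma size_fill (c : Ctx α) (T : BTree α) : (fill c T).size = csize c + T.size := by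
  induction c with
  | hole => simp [fill, csize]
  | nodeL a c r ih => simp [fill, csize, BTree.size, ih]; omega
  | nodeR a l c ih => simp [fill, csize, BTree.size, ih]; omega

lemma subtree_iff_fill (S T : BTree α) : BTree.Subtree S T ↔ ∃ c, T = fill c S := by
  constructor
  · intro h
    induction h with
    | refl => exact ⟨.hole, rfl⟩
    | @left l r a h ih => obtain ⟨c, rfl⟩ := ih; exact ⟨.nodeL a c r, rfl⟩
    | @right l r a h ih => obtain ⟨c, rfl⟩ := ih; exact ⟨.nodeR a l c, rfl⟩
  · rintro ⟨c, rfl⟩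
    induction c with
    | hole => exact .refl S
    | nodeL a c r ih => exact .left ih
    | nodeR a l c ih => exact .right ih

lemma fill_injective (c : Ctx α) : Function.Injective (fill c) := by
  induction c with
  | hole => exact fun a b h => h
  | nodeL a c r ih => intro x y h; simp only [fill, BTree.node.injEq] at h; exact ih h.2.1
  | nodeR a l c ih => intro x y h; simp only [fill, BTree.node.injEq] at h; exact ih h.2.2

lemma stat_fill {Q : Type} (Δ : Option Q → Option Q → α → Q → Prop) (c : Ctx α)
    {T₁ T₂ : BTree α} (h : stat Δ T₁ = stat Δ T₂) :
    stat Δ (fill c T₁) = stat Δ (fill c T₂) := by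
  induction c with
  | hole => exact h
  | nodeL a c r ih => simp only [fill, stat, ih]
  | nodeR a l c ih => simp only [fill, stat, ih]

end Ctx

lemma card_sigma_fintype {ι : Type*} [Fintype ι] (f : ι → Type*) [∀ i, Finite (f i)] :
    Nat.card (Σ i, f i) = ∑ i, Nat.card (f i) := by
  haveI := fun i => Fintype.ofFinite (f i)
  simp [Nat.card_eq_fintype_card]

section Density

variable [Fintype α] [Nonempty α]

lemma bR_pos (n : ℕ) : (0:ℝ) < (catalan n : ℝ) * (Fintype.card α : ℝ) ^ n := by
  have h1 : (0:ℝ) < (catalan n : ℝ) := by exact_mod_cast catalan_pos' n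
  have h2 : (0:ℝ) < (Fintype.card α : ℝ) := by exact_mod_cast Fintype.card_pos
  positivity

lemma density_eq_one_sub (L : Set (BTree α)) (n : ℕ) :
    density L n = 1 - (Nat.card (SzP (fun T => T ∉ L) n) : ℝ) /
      ((catalan n : ℝ) * (Fintype.card α : ℝ) ^ n) := by
  have h := card_split L n
  have hb := bR_pos (α := α) n
  have hcast : (Nat.card (SzP (fun T => T ∈ L) n) : ℝ)
      = (catalan n : ℝ) * (Fintype.card α : ℝ) ^ n
        - (Nat.card (SzP (fun T => T ∉ L) n) : ℝ) := by
    have := congrArg (Nat.cast : ℕ → ℝ) h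
    push_cast at this
    linarith
  show (Nat.card (SzP (fun T => T ∈ L) n) : ℝ) / _ = _
  rw [hcast, sub_div, div_self (ne_of_gt hb)]

lemma density_le_one (L : Set (BTree α)) (n : ℕ) : density L n ≤ 1 := by
  rw [density_eq_one_sub]
  have hb := bR_pos (α := α) n
  have : (0:ℝ) ≤ (Nat.card (SzP (fun T => T ∉ L) n) : ℝ) := by positivity
  have := div_nonneg this (le_of_lt hb)
  linarith

end Density

section PartC

variable [Fintype α] [Nonempty α]

lemma exists_low_density {Q : Type} [Fintype Q] (Δ : Option Q → Option Q → α → Q → Prop)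
    (F : Set Q) (h : ∀ S : BTree α, ∃ T, BTree.Subtree S T ∧ ¬ TAccepts Δ F T) :
    ∃ (M : ℕ) (ε : ℝ), 0 < ε ∧ ∀ n : ℕ, ∃ N, n ≤ N ∧ N ≤ n + M ∧
      density {T : BTree α | TAccepts Δ F T} N ≤ 1 - ε := by
  classical
  haveI : Fintype (Set (Option Q)) := Fintype.ofFinite _
  set L : Set (BTree α) := {T : BTree α | TAccepts Δ F T} with hLdef
  have key2 : ∀ U : Set (Option Q), ∃ c : Ctx α, ∀ T : BTree α,
      stat Δ T = U → fill c T ∉ L := by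
    intro U
    by_cases hU : ∃ T₀ : BTree α, stat Δ T₀ = U
    · obtain ⟨T₀, hT₀⟩ := hU
      obtain ⟨T', hsub, hT'⟩ := h T₀
      obtain ⟨c, rfl⟩ := (subtree_iff_fill _ _).1 hsub
      refine ⟨c, fun T hT hacc => hT' ?_⟩
      have hstat : stat Δ (fill c T) = stat Δ (fill c T₀) :=
        stat_fill Δ c (hT.trans hT₀.symm)
      have : TAccepts Δ F (fill c T) := hacc
      rw [taccepts_iff_stat] at this ⊢
      rwa [hstat] at this
    · exact ⟨.hole, fun T hT => absurd ⟨T, hT⟩ hU⟩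
  choose cfun hcfun using key2
  set M : ℕ := Finset.univ.sup (fun U : Set (Option Q) => csize (cfun U)) with hM
  set K : ℕ := Fintype.card (Set (Option Q)) with hK
  have hKpos : 0 < K := Fintype.card_pos
  have hcard : (0:ℝ) < (Fintype.card α : ℝ) := by exact_mod_cast Fintype.card_pos
  refine ⟨M, 1 / (K * (4 * Fintype.card α)^M), by positivity, fun n => ?_⟩
  haveI : ∀ (P : BTree α → Prop) (m : ℕ), Finite (SzP P m) := finite_szP
  -- counting by state set
  have hsum : ∑ U : Set (Option Q), Nat.card (SzP (fun T => stat Δ T = U) n)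
      = catalan n * Fintype.card α ^ n := by
    rw [← card_sz (α := α) n, ← card_sigma_fintype]
    refine (Nat.card_congr ?_).symm
    exact {
      toFun := fun x => ⟨stat Δ x.val, x.val, rfl, x.2.2⟩
      invFun := fun x => ⟨x.2.val, trivial, x.2.2.2⟩
      left_inv := fun x => Subtype.ext rfl
      right_inv := fun x => by
        obtain ⟨U, T, hT, hs⟩ := x
        subst hT
        rfl }
  obtain ⟨U, -, hU⟩ := Finset.exists_max_image Finset.univ
    (fun U : Set (Option Q) => Nat.card (SzP (fun T => stat Δ T = U) n)) ⟨∅, Finset.mem_univ _⟩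
  have hple : catalan n * Fintype.card α ^ n
      ≤ K * Nat.card (SzP (fun T => stat Δ T = U) n) := by
    rw [← hsum]
    calc ∑ V : Set (Option Q), Nat.card (SzP (fun T => stat Δ T = V) n)
        ≤ (Finset.univ : Finset (Set (Option Q))).card * Nat.card (SzP (fun T => stat Δ T = U) n) := by
          rw [← smul_eq_mul]
          exact Finset.sum_le_card_nsmul _ _ _ (fun V _ => hU V (Finset.mem_univ V))
      _ = K * Nat.card (SzP (fun T => stat Δ T = U) n) := by rw [Finset.card_univ]
  set c : Ctx α := cfun U with hc
  set m : ℕ := csize c with hm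
  have hmM : m ≤ M :=
    Finset.le_sup (f := fun U : Set (Option Q) => csize (cfun U)) (Finset.mem_univ U)
  -- injection into complement
  have hinj : Nat.card (SzP (fun T => stat Δ T = U) n)
      ≤ Nat.card (SzP (fun T : BTree α => T ∉ L) (n + m)) := by
    refine Nat.card_le_card_of_injective
      (fun x : SzP (fun T => stat Δ T = U) n =>
        (⟨fill c x.val, hcfun U x.val x.2.1, by rw [size_fill]; omega⟩ :
          SzP (fun T : BTree α => T ∉ L) (n + m))) ?_
    rintro ⟨T, hT⟩ ⟨T', hT'⟩ e
    dsimp only at e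
    simp only [Subtype.mk.injEq] at e
    exact Subtype.ext (fill_injective c e)
  refine ⟨n + m, by omega, by omega, ?_⟩
  rw [density_eq_one_sub]
  have hbn := bR_pos (α := α) n
  have hbN := bR_pos (α := α) (n + m)
  refine sub_le_sub_left ?_ 1
  -- goal: ε ≤ cntC / bR (n+m)
  have hbound : ((catalan (n+m) : ℝ) * (Fintype.card α : ℝ) ^ (n+m))
      ≤ ((4 * Fintype.card α : ℕ) : ℝ)^M * ((catalan n : ℝ) * (Fintype.card α : ℝ) ^ n) := by
    have h1 : (catalan (n+m) : ℝ) ≤ (4:ℝ)^M * catalan n := by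
      have := catalan_add_le n m
      have h4 : (4:ℕ)^m * catalan n ≤ 4^M * catalan n :=
        Nat.mul_le_mul_right _ (Nat.pow_le_pow_right (by omega) hmM)
      exact_mod_cast le_trans this h4
    have h2 : ((Fintype.card α : ℝ)) ^ (n+m) ≤ (Fintype.card α : ℝ)^M * (Fintype.card α : ℝ)^n := by
      rw [pow_add]
      have : ((Fintype.card α : ℝ))^m ≤ (Fintype.card α : ℝ)^M := by
        apply pow_le_pow_right₀ _ hmM
        exact_mod_cast Fintype.card_pos
      nlinarith [pow_pos hcard n, pow_pos hcard m]
    push_cast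
    calc (catalan (n+m) : ℝ) * (Fintype.card α : ℝ) ^ (n+m)
        ≤ ((4:ℝ)^M * catalan n) * ((Fintype.card α : ℝ)^M * (Fintype.card α : ℝ)^n) := by
          apply mul_le_mul h1 h2 (by positivity) (by positivity)
      _ = (4 * (Fintype.card α:ℝ))^M * ((catalan n : ℝ) * (Fintype.card α : ℝ) ^ n) := by
          rw [mul_pow]; ring
  have hcnt : ((catalan n : ℝ) * (Fintype.card α : ℝ) ^ n) / K
      ≤ (Nat.card (SzP (fun T : BTree α => T ∉ L) (n + m)) : ℝ) := by
    rw [div_le_iff₀ (by exact_mod_cast hKpos)]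
    have : (catalan n * Fintype.card α ^ n : ℕ) ≤ K * Nat.card (SzP (fun T : BTree α => T ∉ L) (n + m)) :=
      le_trans hple (Nat.mul_le_mul_left _ hinj)
    calc ((catalan n:ℝ) * (Fintype.card α:ℝ)^n) = ((catalan n * Fintype.card α ^ n : ℕ) : ℝ) := by push_cast; ring
      _ ≤ ((K * Nat.card (SzP (fun T : BTree α => T ∉ L) (n + m)) : ℕ) : ℝ) := by exact_mod_cast this
      _ = (Nat.card (SzP (fun T : BTree α => T ∉ L) (n + m)) : ℝ) * K := by push_cast; ring
  rw [div_le_div_iff₀ (by positivity) hbN]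
  have hKR : (0:ℝ) < (K:ℝ) := by exact_mod_cast hKpos
  have h4M : (0:ℝ) < ((4 * Fintype.card α : ℕ) : ℝ)^M := by positivity
  calc (1:ℝ) * ((catalan (n+m) : ℝ) * (Fintype.card α : ℝ) ^ (n+m))
      ≤ ((4 * Fintype.card α : ℕ) : ℝ)^M * ((catalan n : ℝ) * (Fintype.card α : ℝ) ^ n) := by
        rw [one_mul]; exact hbound
    _ = (((catalan n : ℝ) * (Fintype.card α : ℝ) ^ n) / K) * ((K:ℝ) * ((4 * Fintype.card α : ℕ) : ℝ)^M) := by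
        field_simp
    _ ≤ (Nat.card (SzP (fun T : BTree α => T ∉ L) (n + m)) : ℝ) * ((K:ℝ) * ((4 * Fintype.card α : ℕ) : ℝ)^M) := by
        apply mul_le_mul_of_nonneg_right hcnt (by positivity)
    _ = (Nat.card (SzP (fun T : BTree α => T ∉ L) (n + m)) : ℝ) * ((K:ℝ) * (4 * (Fintype.card α:ℝ))^M) := by
        push_cast; ring

end PartC

section PartB

variable [Fintype α] [Nonempty α]

/-- fraction of size-`n` trees avoiding `S` -/
noncomputable def qq (S : BTree α) (n : ℕ) : ℝ :=
  (Nat.card (SzP (fun T => ¬ BTree.Subtree S T) n) : ℝ) /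
    ((catalan n : ℝ) * (Fintype.card α : ℝ) ^ n)

/-- catalan weights -/
noncomputable def ww (n k : ℕ) : ℝ :=
  (catalan k : ℝ) * (catalan (n - k) : ℝ) / (catalan (n+1) : ℝ)

lemma catR_pos (n : ℕ) : (0:ℝ) < (catalan n : ℝ) := by exact_mod_cast catalan_pos' n

lemma ww_pos (n k : ℕ) : 0 < ww n k := by
  unfold ww
  exact div_pos (mul_pos (catR_pos k) (catR_pos (n-k))) (catR_pos (n+1))

lemma ww_symm {n k : ℕ} (h : k ≤ n) : ww n (n - k) = ww n k := by
  unfold ww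
  rw [Nat.sub_sub_self h, mul_comm]

lemma ww_sum (n : ℕ) : ∑ k ∈ Finset.range (n+1), ww n k = 1 := by
  unfold ww
  rw [← Finset.sum_div]
  rw [div_eq_one_iff_eq (ne_of_gt (catR_pos (n+1)))]
  have := catalan_succ n
  have h2 : (catalan (n+1) : ℝ) = ∑ k ∈ Finset.range (n+1), (catalan k : ℝ) * (catalan (n-k) : ℝ) := by
    rw [this, Fin.sum_univ_eq_sum_range (fun i => catalan i * catalan (n - i))]
    push_cast
    rfl
  exact h2.symm

lemma qq_nonneg (S : BTree α) (n : ℕ) : 0 ≤ qq S n :=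
  div_nonneg (by positivity) (le_of_lt (bR_pos n))

lemma qq_le_one (S : BTree α) (n : ℕ) : qq S n ≤ 1 := by
  unfold qq
  rw [div_le_one (bR_pos n)]
  have h := card_szP_le (fun T => ¬ BTree.Subtree S T) n
  calc (Nat.card (SzP (fun T => ¬ BTree.Subtree S T) n) : ℝ)
      ≤ ((catalan n * Fintype.card α ^ n : ℕ) : ℝ) := by exact_mod_cast h
    _ = (catalan n : ℝ) * (Fintype.card α : ℝ) ^ n := by push_cast; ring

lemma qq_self_lt (S : BTree α) :
    qq S S.size ≤ 1 - 1 / ((catalan S.size : ℝ) * (Fintype.card α : ℝ) ^ S.size) := by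
  classical
  set s := S.size
  haveI : ∀ (P : BTree α → Prop) (m : ℕ), Finite (SzP P m) := finite_szP
  have hcard : Nat.card (SzP (fun T => ¬ BTree.Subtree S T) s) + 1 ≤ catalan s * Fintype.card α ^ s := by
    rw [← card_sz (α := α) s]
    have : Nat.card (SzP (fun T => ¬ BTree.Subtree S T) s) + 1
        = Nat.card ((SzP (fun T => ¬ BTree.Subtree S T) s) ⊕ Unit) := by
      rw [Nat.card_sum]; simp
    rw [this]
    refine Nat.card_le_card_of_injective
      (fun x => match x with
        | .inl y => (⟨y.val, trivial, y.2.2⟩ : SzP (fun _ => True) s)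
        | .inr _ => ⟨S, trivial, rfl⟩) ?_
    rintro (⟨T, hT⟩ | ⟨⟩) (⟨T', hT'⟩ | ⟨⟩) e <;> dsimp only at e
    · simp only [Subtype.mk.injEq] at e; subst e; exact congrArg _ (Subtype.ext rfl)
    · simp only [Subtype.mk.injEq] at e; subst e; exact absurd (BTree.Subtree.refl _) hT.1
    · simp only [Subtype.mk.injEq] at e; subst e; exact absurd (BTree.Subtree.refl _) hT'.1
    · rfl
  have hb := bR_pos (α := α) s
  unfold qq
  rw [div_le_iff₀ hb, sub_mul, one_mul, div_mul_cancel₀ _ (ne_of_gt hb)]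
  have : ((Nat.card (SzP (fun T => ¬ BTree.Subtree S T) s) + 1 : ℕ) : ℝ)
      ≤ ((catalan s * Fintype.card α ^ s : ℕ) : ℝ) := by exact_mod_cast hcard
  push_cast at this
  linarith

lemma qq_rec (S : BTree α) (n : ℕ) :
    qq S (n+1) ≤ ∑ k ∈ Finset.range (n+1), ww n k * qq S k * qq S (n - k) := by
  have hrec := card_szP_succ_le (fun T => ¬ BTree.Subtree S T)
    (fun a l r h => ⟨fun hl => h (BTree.Subtree.left hl), fun hr => h (BTree.Subtree.right hr)⟩) n
  have hA : ∀ m, (0:ℝ) ≤ (Nat.card (SzP (fun T => ¬ BTree.Subtree S T) m) : ℝ) := by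
    intro m; positivity
  set A : ℕ → ℝ := fun m => (Nat.card (SzP (fun T => ¬ BTree.Subtree S T) m) : ℝ) with hAdef
  have hcast : A (n+1) ≤ (Fintype.card α : ℝ) * ∑ k ∈ Finset.range (n+1), A k * A (n - k) := by
    have h0 : ((Nat.card (SzP (fun T => ¬ BTree.Subtree S T) (n+1)) : ℕ) : ℝ)
        ≤ ((Fintype.card α * ∑ k : Fin (n+1), Nat.card (SzP (fun T => ¬ BTree.Subtree S T) k.val)
          * Nat.card (SzP (fun T => ¬ BTree.Subtree S T) (n - k.val)) : ℕ) : ℝ) := by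
      exact_mod_cast hrec
    calc A (n+1) ≤ ((Fintype.card α * ∑ k : Fin (n+1), Nat.card (SzP (fun T => ¬ BTree.Subtree S T) k.val)
          * Nat.card (SzP (fun T => ¬ BTree.Subtree S T) (n - k.val)) : ℕ) : ℝ) := h0
      _ = (Fintype.card α : ℝ) * ∑ k : Fin (n+1), A k.val * A (n - k.val) := by
          push_cast; rfl
      _ = (Fintype.card α : ℝ) * ∑ k ∈ Finset.range (n+1), A k * A (n - k) := by
          rw [Fin.sum_univ_eq_sum_range (fun i => A i * A (n - i))]
  -- divide by bR (n+1)
  unfold qq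
  rw [div_le_iff₀ (bR_pos (n+1))]
  have key : ∀ k ∈ Finset.range (n+1),
      ww n k * ((A k) / ((catalan k : ℝ) * (Fintype.card α : ℝ) ^ k))
        * ((A (n-k)) / ((catalan (n-k) : ℝ) * (Fintype.card α : ℝ) ^ (n-k)))
        * ((catalan (n+1) : ℝ) * (Fintype.card α : ℝ) ^ (n+1))
      = (Fintype.card α : ℝ) * (A k * A (n - k)) := by
    intro k hk
    have hkn : k ≤ n := by simpa using Nat.lt_succ_iff.mp (Finset.mem_range.mp hk)
    unfold ww
    have e1 : (Fintype.card α : ℝ) ^ k * (Fintype.card α : ℝ) ^ (n - k) = (Fintype.card α : ℝ) ^ n := by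
      rw [← pow_add]; congr 1; omega
    have c1 := catR_pos k
    have c2 := catR_pos (n - k)
    have c3 := catR_pos (n+1)
    have p1 : (0:ℝ) < (Fintype.card α : ℝ) ^ k := by positivity
    have p2 : (0:ℝ) < (Fintype.card α : ℝ) ^ (n-k) := by positivity
    field_simp
    rw [pow_succ, ← e1]
    ring
  calc (∑ k ∈ Finset.range (n+1), ww n k * qq S k * qq S (n - k))
        * ((catalan (n+1) : ℝ) * (Fintype.card α : ℝ) ^ (n+1))
      = ∑ k ∈ Finset.range (n+1), (Fintype.card α : ℝ) * (A k * A (n - k)) := by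
        rw [Finset.sum_mul]
        exact Finset.sum_congr rfl key
    _ = (Fintype.card α : ℝ) * ∑ k ∈ Finset.range (n+1), A k * A (n - k) := by
        rw [Finset.mul_sum]
    _ ≥ A (n+1) := hcast

end PartB

section PartB2

lemma catalan_ratio (n : ℕ) :
    (catalan (n+1) : ℝ) / (catalan n : ℝ) = (4*n + 2) / (n + 2) := by
  have h := catalan_rec n
  have hcast : ((n:ℝ) + 2) * (catalan (n+1) : ℝ) = (4*(n:ℝ) + 2) * (catalan n : ℝ) := by
    exact_mod_cast h
  have c1 := catR_pos n
  have c2 := catR_pos (n+1)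
  field_simp
  linarith [hcast]

lemma tendsto_catalan_ratio :
    Tendsto (fun n : ℕ => (catalan (n+1) : ℝ) / (catalan n : ℝ)) atTop (𝓝 4) := by
  have h : ∀ n : ℕ, (catalan (n+1) : ℝ) / (catalan n : ℝ) = 4 - 6 / ((n:ℝ) + 2) := by
    intro n
    rw [catalan_ratio]
    have : ((n:ℝ) + 2) ≠ 0 := by positivity
    field_simp
    ring
  simp only [h]
  have h2 : Tendsto (fun n : ℕ => 6 / ((n:ℝ) + 2)) atTop (𝓝 0) := by
    apply Tendsto.div_atTop tendsto_const_nhds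
    exact tendsto_atTop_add_const_right atTop 2 tendsto_natCast_atTop_atTop
  have := tendsto_const_nhds (x := (4:ℝ)) (f := atTop (α := ℕ)) |>.sub h2
  simpa using this

lemma tendsto_catalan_ratio_inv :
    Tendsto (fun n : ℕ => (catalan n : ℝ) / (catalan (n+1) : ℝ)) atTop (𝓝 (1/4)) := by
  have h := tendsto_catalan_ratio.inv₀ (by norm_num)
  have he : ∀ n : ℕ, ((catalan (n+1) : ℝ) / (catalan n : ℝ))⁻¹
      = (catalan n : ℝ) / (catalan (n+1) : ℝ) := by
    intro n; rw [inv_div]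
  simp only [he] at h
  simpa using h

lemma tendsto_catalan_shift (k : ℕ) :
    Tendsto (fun n : ℕ => (catalan n : ℝ) / (catalan (n + (k+1)) : ℝ)) atTop (𝓝 ((1/4)^(k+1))) := by
  induction k with
  | zero => simpa using tendsto_catalan_ratio_inv
  | succ k ih =>
    have h2 : Tendsto (fun n : ℕ => (catalan (n + (k+1)) : ℝ) / (catalan ((n + (k+1)) + 1) : ℝ))
        atTop (𝓝 (1/4)) :=
      tendsto_catalan_ratio_inv.comp (tendsto_add_atTop_nat (k+1))
    have h3 := ih.mul h2
    have he : ∀ n : ℕ, ((catalan n : ℝ) / (catalan (n + (k+1)) : ℝ))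
        * ((catalan (n + (k+1)) : ℝ) / (catalan ((n + (k+1)) + 1) : ℝ))
        = (catalan n : ℝ) / (catalan (n + (k+2)) : ℝ) := by
      intro n
      rw [div_mul_div_comm, mul_comm (catalan (n+(k+1)) : ℝ), mul_div_mul_right, show n + (k+1) + 1 = n + (k+2) by ring]
      exact ne_of_gt (catR_pos _)
    simp only [he] at h3
    have : ((1:ℝ)/4)^(k+1) * (1/4) = (1/4)^(k+2) := by ring
    rwa [this] at h3

lemma tendsto_ww (k : ℕ) :
    Tendsto (fun n : ℕ => ww n k) atTop (𝓝 ((catalan k : ℝ) / 4^(k+1))) := by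
  have h1 : Tendsto (fun n : ℕ => (catalan (n - k) : ℝ) / (catalan ((n - k) + (k+1)) : ℝ))
      atTop (𝓝 ((1/4)^(k+1))) :=
    (tendsto_catalan_shift k).comp (tendsto_sub_atTop_nat k)
  have h2 : (fun n : ℕ => (catalan (n - k) : ℝ) / (catalan (n + 1) : ℝ))
      =ᶠ[atTop] (fun n : ℕ => (catalan (n - k) : ℝ) / (catalan ((n - k) + (k+1)) : ℝ)) := by
    filter_upwards [eventually_ge_atTop k] with n hn
    have harg : n - k + (k+1) = n + 1 := by omega
    rw [harg]
  have h3 : Tendsto (fun n : ℕ => (catalan (n - k) : ℝ) / (catalan (n+1) : ℝ))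
      atTop (𝓝 ((1/4)^(k+1))) := Tendsto.congr' h2.symm h1
  have h4 := h3.const_mul ((catalan k : ℝ))
  have he : ∀ n : ℕ, (catalan k : ℝ) * ((catalan (n - k) : ℝ) / (catalan (n+1) : ℝ)) = ww n k := by
    intro n; unfold ww; ring
  simp only [he] at h4
  have : (catalan k : ℝ) * (1/4)^(k+1) = (catalan k : ℝ) / 4^(k+1) := by
    rw [div_pow, one_pow]; ring
  rwa [this] at h4

lemma partial_sum_catalan (E : ℕ) :
    ∑ k ∈ Finset.range (E+1), (catalan k : ℝ) / 4^(k+1)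
      = 1/2 - ((2*E + 4) * (catalan (E+1) : ℝ)) / 4^(E+2) := by
  induction E with
  | zero => norm_num [catalan_one]
  | succ E ih =>
    rw [Finset.sum_range_succ, ih]
    have hrec : ((E:ℝ) + 3) * (catalan (E+2) : ℝ) = (4*(E:ℝ) + 6) * (catalan (E+1) : ℝ) := by
      have := catalan_rec (E+1)
      have h2 : ((E + 1 + 2) * catalan (E+1+1) : ℕ) = ((4*(E+1) + 2) * catalan (E+1) : ℕ) := this
      exact_mod_cast h2
    have h3 : (0:ℝ) < ((E:ℝ) + 3) := by positivity
    have hc : (catalan (E+2) : ℝ) = (4*(E:ℝ) + 6) * (catalan (E+1) : ℝ) / ((E:ℝ) + 3) := by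
      field_simp
      linarith [hrec]
    rw [show E + 1 + 1 = E + 2 from rfl, hc]
    have h4 : (4:ℝ)^(E+2) ≠ 0 := by positivity
    have h5 : (4:ℝ)^(E+3) ≠ 0 := by positivity
    have h6 : (4:ℝ)^(E+3) = 4 * 4^(E+2) := by ring
    push_cast
    field_simp
    ring

lemma partial_sum_catalan_le (E : ℕ) :
    ∑ k ∈ Finset.range (E+1), (catalan k : ℝ) / 4^(k+1) ≤ 1/2 := by
  rw [partial_sum_catalan]
  have : (0:ℝ) ≤ ((2*E + 4) * (catalan (E+1) : ℝ)) / 4^(E+2) := by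
    have := catR_pos (E+1); positivity
  linarith

end PartB2

section PartB3

variable [Fintype α] [Nonempty α]

lemma qq_step (S : BTree α) {β δ γ cs : ℝ} {N E n : ℕ}
    (hβ0 : 0 ≤ β) (hβ1 : β ≤ 1)
    (hb : ∀ j, N ≤ j → qq S j ≤ β)
    (hE1 : S.size ≤ E) (hE2 : N ≤ E)
    (hn : 2*E + 2 ≤ n)
    (hws : cs/2 ≤ ww n S.size)
    (hgap : γ ≤ 1 - qq S S.size) (hγ0 : 0 ≤ γ)
    (hcs0 : 0 ≤ cs)
    (hW : 2 * (∑ k ∈ Finset.range (E+1), ww n k) ≤ 1 + δ)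
    (hδ : δ = cs * γ / 2) (hδ0 : 0 ≤ δ) :
    qq S (n+1) ≤ β * (1 - δ) := by
  classical
  set s := S.size with hsdef
  set u : ℕ → ℝ := fun k => if k ≤ E then qq S k else if n - k ≤ E then qq S (n-k) else β
    with hu
  have hq0 : ∀ m, 0 ≤ qq S m := qq_nonneg S
  have hq1 : ∀ m, qq S m ≤ 1 := qq_le_one S
  have hwpos : ∀ k, (0:ℝ) ≤ ww n k := fun k => le_of_lt (ww_pos n k)
  -- step 2 : termwise bound
  have step2 : ∀ k ∈ Finset.range (n+1),
      ww n k * qq S k * qq S (n-k) ≤ β * (ww n k * u k) := by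
    intro k hk
    have hkn : k ≤ n := Nat.lt_succ_iff.mp (Finset.mem_range.mp hk)
    by_cases h1 : k ≤ E
    · have hnk : N ≤ n - k := by omega
      have : qq S (n-k) ≤ β := hb _ hnk
      have h2 : ww n k * qq S k * qq S (n-k) ≤ ww n k * qq S k * β :=
        mul_le_mul_of_nonneg_left this (mul_nonneg (hwpos k) (hq0 k))
      rw [hu]; simp only [if_pos h1]
      calc ww n k * qq S k * qq S (n-k) ≤ ww n k * qq S k * β := h2
        _ = β * (ww n k * qq S k) := by ring
    · by_cases h2 : n - k ≤ E
      · have hknN : N ≤ k := by omega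
        have hql : qq S k ≤ β := hb _ hknN
        rw [hu]; simp only [if_neg h1, if_pos h2]
        calc ww n k * qq S k * qq S (n-k) ≤ ww n k * β * qq S (n-k) := by
              apply mul_le_mul_of_nonneg_right _ (hq0 _)
              exact mul_le_mul_of_nonneg_left hql (hwpos k)
          _ = β * (ww n k * qq S (n-k)) := by ring
      · have hknN : N ≤ k := by omega
        have hnkN : N ≤ n - k := by omega
        have hql : qq S k ≤ β := hb _ hknN
        have hqr : qq S (n-k) ≤ β := hb _ hnkN
        rw [hu]; simp only [if_neg h1, if_neg h2]
        calc ww n k * qq S k * qq S (n-k) ≤ ww n k * β * β := by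
              apply mul_le_mul _ hqr (hq0 _) (mul_nonneg (hwpos k) hβ0)
              exact mul_le_mul_of_nonneg_left hql (hwpos k)
          _ = β * (ww n k * β) := by ring
  have hstep : qq S (n+1) ≤ β * ∑ k ∈ Finset.range (n+1), ww n k * u k := by
    calc qq S (n+1) ≤ ∑ k ∈ Finset.range (n+1), ww n k * qq S k * qq S (n-k) := qq_rec S n
      _ ≤ ∑ k ∈ Finset.range (n+1), β * (ww n k * u k) := Finset.sum_le_sum step2
      _ = β * ∑ k ∈ Finset.range (n+1), ww n k * u k := by rw [Finset.mul_sum]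
  -- split the sum
  set A : Finset ℕ := Finset.range (E+1) with hA
  set B : Finset ℕ := A.image (fun j => n - j) with hB
  have hmemA : ∀ k, k ∈ A ↔ k ≤ E := by intro k; simp [hA, Nat.lt_succ_iff]
  have hmemB : ∀ k, k ∈ B ↔ (n - E ≤ k ∧ k ≤ n) := by
    intro k
    simp only [hB, Finset.mem_image, hmemA]
    constructor
    · rintro ⟨j, hj, rfl⟩; omega
    · rintro ⟨h1, h2⟩; exact ⟨n - k, by omega, by omega⟩
  have hdisj : Disjoint A B := by
    rw [Finset.disjoint_left]
    intro k hkA hkB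
    rw [hmemA] at hkA; rw [hmemB] at hkB
    omega
  have hsub : A ∪ B ⊆ Finset.range (n+1) := by
    intro k hk
    rw [Finset.mem_union, hmemA, hmemB] at hk
    rw [Finset.mem_range]
    omega
  have hzero : ∀ k ∈ Finset.range (n+1), k ∉ A ∪ B → ww n k * (u k - β) = 0 := by
    intro k hk hknot
    rw [Finset.mem_union, hmemA, hmemB, Finset.mem_range] at *
    push_neg at hknot
    have h1 : ¬ (k ≤ E) := by omega
    have h2 : ¬ (n - k ≤ E) := by omega
    rw [hu]; simp only [if_neg h1, if_neg h2]
    ring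
  have hsplit : ∑ k ∈ Finset.range (n+1), ww n k * (u k - β)
      = (∑ k ∈ A, ww n k * (u k - β)) + (∑ k ∈ B, ww n k * (u k - β)) := by
    rw [← Finset.sum_union hdisj]
    symm
    apply Finset.sum_subset hsub
    exact hzero
  have hBsum : ∑ k ∈ B, ww n k * (u k - β) = ∑ k ∈ A, ww n k * (qq S k - β) := by
    rw [hB, Finset.sum_image (by intro a ha b hb' e; rw [Finset.mem_coe, hmemA] at ha hb'; dsimp only at e; omega)]
    apply Finset.sum_congr rfl
    intro j hj
    rw [hmemA] at hj
    have h1 : ¬ (n - j ≤ E) := by omega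
    have h2 : n - (n - j) = j := by omega
    have h3 : n - (n - j) ≤ E := by omega
    rw [hu]
    simp only [if_neg h1, if_pos h3, h2, ww_symm (show j ≤ n by omega), if_pos hj]
  have hAsum : ∑ k ∈ A, ww n k * (u k - β) = ∑ k ∈ A, ww n k * (qq S k - β) := by
    apply Finset.sum_congr rfl
    intro k hk
    rw [hmemA] at hk
    rw [hu]; simp only [if_pos hk]
  -- bound the A-sum
  have hsA : s ∈ A := by rw [hmemA]; exact hE1
  have hAbound : ∑ k ∈ A, ww n k * (qq S k - β)
      ≤ (∑ k ∈ A, ww n k) * (1 - β) - ww n s * (1 - qq S s) := by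
    have h1 : ∑ k ∈ A.erase s, ww n k * (qq S k - β) + ww n s * (qq S s - β)
        = ∑ k ∈ A, ww n k * (qq S k - β) := Finset.sum_erase_add A _ hsA
    have h2 : ∑ k ∈ A.erase s, ww n k * (qq S k - β)
        ≤ ∑ k ∈ A.erase s, ww n k * (1 - β) := by
      apply Finset.sum_le_sum
      intro k _
      apply mul_le_mul_of_nonneg_left _ (hwpos k)
      linarith [hq1 k]
    have h3 : ∑ k ∈ A.erase s, ww n k * (1 - β)
        = ((∑ k ∈ A, ww n k) - ww n s) * (1 - β) := by
      rw [← Finset.sum_mul]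
      congr 1
      have := Finset.sum_erase_add A (fun k => ww n k) hsA
      linarith [this]
    have h4 : ww n s * (qq S s - β) = ww n s * (1 - β) - ww n s * (1 - qq S s) := by ring
    calc ∑ k ∈ A, ww n k * (qq S k - β)
        = ∑ k ∈ A.erase s, ww n k * (qq S k - β) + ww n s * (qq S s - β) := h1.symm
      _ ≤ ((∑ k ∈ A, ww n k) - ww n s) * (1 - β) + (ww n s * (1 - β) - ww n s * (1 - qq S s)) := by
          rw [← h4]
          exact add_le_add (le_trans h2 (le_of_eq h3)) (le_refl _)
      _ = (∑ k ∈ A, ww n k) * (1 - β) - ww n s * (1 - qq S s) := by ring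
  -- assemble
  have hsum_u : ∑ k ∈ Finset.range (n+1), ww n k * u k
      = β + ∑ k ∈ Finset.range (n+1), ww n k * (u k - β) := by
    have : ∀ k, ww n k * u k = ww n k * β + ww n k * (u k - β) := by intro k; ring
    simp only [this]
    rw [Finset.sum_add_distrib, ← Finset.sum_mul, ww_sum n, one_mul]
  have hwsgap : cs / 2 * γ ≤ ww n s * (1 - qq S s) := by
    apply mul_le_mul hws hgap hγ0
    exact le_trans (by linarith) hws
  have hfinal : ∑ k ∈ Finset.range (n+1), ww n k * u k ≤ 1 - δ := by
    rw [hsum_u, hsplit, hBsum, hAsum]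
    have hWA : (∑ k ∈ A, ww n k) * (1 - β) ≤ (1 + δ)/2 * (1 - β) := by
      apply mul_le_mul_of_nonneg_right _ (by linarith)
      linarith [hW]
    have h5 : ∑ k ∈ A, ww n k * (qq S k - β) ≤ (1 + δ)/2 * (1 - β) - cs/2 * γ := by
      calc ∑ k ∈ A, ww n k * (qq S k - β)
          ≤ (∑ k ∈ A, ww n k) * (1 - β) - ww n s * (1 - qq S s) := hAbound
        _ ≤ (1 + δ)/2 * (1 - β) - cs/2 * γ := by
            have := hwsgap
            linarith
    have hcsγ : cs * γ = 2 * δ := by rw [hδ]; ring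
    nlinarith [h5]
  calc qq S (n+1) ≤ β * ∑ k ∈ Finset.range (n+1), ww n k * u k := hstep
    _ ≤ β * (1 - δ) := mul_le_mul_of_nonneg_left hfinal hβ0

end PartB3

section PartB4

variable [Fintype α] [Nonempty α]

theorem qq_tendsto_zero (S : BTree α) : Tendsto (qq S) atTop (𝓝 0) := by
  classical
  set s := S.size with hsdef
  have hbRs := bR_pos (α := α) s
  set γ : ℝ := 1 / ((catalan s : ℝ) * (Fintype.card α : ℝ) ^ s) with hγ
  have hγ0 : 0 < γ := by rw [hγ]; positivity
  set cs : ℝ := (catalan s : ℝ) / 4^(s+1) with hcs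
  have hcs0 : 0 < cs := by rw [hcs]; exact div_pos (catR_pos s) (by positivity)
  set δ : ℝ := cs * γ / 2 with hδ
  have hδ0 : 0 < δ := by rw [hδ]; positivity
  have hδlt : δ < 1 := by
    have hprod : cs * γ = 1 / ((4:ℝ)^(s+1) * (Fintype.card α : ℝ) ^ s) := by
      rw [hcs, hγ]
      have h1 : (catalan s : ℝ) ≠ 0 := ne_of_gt (catR_pos s)
      have h2 : ((Fintype.card α : ℝ)) ^ s ≠ 0 := by
        have : (0:ℝ) < (Fintype.card α : ℝ) := by exact_mod_cast Fintype.card_pos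
        positivity
      field_simp
    have hden : (1:ℝ) ≤ (4:ℝ)^(s+1) * (Fintype.card α : ℝ) ^ s := by
      have h1 : (1:ℝ) ≤ (4:ℝ)^(s+1) := one_le_pow₀ (by norm_num)
      have h2 : (1:ℝ) ≤ ((Fintype.card α : ℝ)) ^ s := by
        apply one_le_pow₀
        exact_mod_cast Fintype.card_pos
      nlinarith
    have : cs * γ ≤ 1 := by rw [hprod]; rw [div_le_one (by linarith)]; linarith
    rw [hδ]; linarith
  have hgap : γ ≤ 1 - qq S s := by
    have := qq_self_lt S
    rw [hγ]
    linarith [this]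
  -- main induction
  have main : ∀ i : ℕ, ∃ N : ℕ, ∀ n, N ≤ n → qq S n ≤ (1-δ)^i := by
    intro i
    induction i with
    | zero => exact ⟨0, fun n _ => by simpa using qq_le_one S n⟩
    | succ i ih =>
      obtain ⟨N, hN⟩ := ih
      set β : ℝ := (1-δ)^i with hβ
      have hβ0 : 0 ≤ β := by rw [hβ]; exact pow_nonneg (by linarith) i
      have hβ1 : β ≤ 1 := by
        rw [hβ]; exact pow_le_one₀ (by linarith) (by linarith)
      set E : ℕ := N + s with hE
      -- eventual facts
      have hws_ev : ∀ᶠ n in atTop, cs/2 ≤ ww n s := by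
        have ht := tendsto_ww s
        have : cs/2 < cs := by linarith
        filter_upwards [ht.eventually (eventually_gt_nhds this)] with n hn
        exact le_of_lt hn
      have hW_ev : ∀ᶠ n in atTop, 2 * (∑ k ∈ Finset.range (E+1), ww n k) ≤ 1 + δ := by
        have ht : Tendsto (fun n => ∑ k ∈ Finset.range (E+1), ww n k) atTop
            (𝓝 (∑ k ∈ Finset.range (E+1), (catalan k : ℝ) / 4^(k+1))) :=
          tendsto_finset_sum _ (fun k _ => tendsto_ww k)
        have hlt : (∑ k ∈ Finset.range (E+1), (catalan k : ℝ) / 4^(k+1)) < 1/2 + δ/2 :=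
          lt_of_le_of_lt (partial_sum_catalan_le E) (by linarith)
        filter_upwards [ht.eventually (eventually_lt_nhds hlt)] with n hn
        linarith
      rw [eventually_atTop] at hws_ev hW_ev
      obtain ⟨N1, hN1⟩ := hws_ev
      obtain ⟨N2, hN2⟩ := hW_ev
      refine ⟨max (max N1 N2) (2*E + 2) + 1, fun n hn => ?_⟩
      obtain ⟨m, rfl⟩ : ∃ m, n = m + 1 := ⟨n - 1, by omega⟩
      have h1 : N1 ≤ m := by omega
      have h2 : N2 ≤ m := by omega
      have h3 : 2*E + 2 ≤ m := by omega
      have := qq_step S hβ0 hβ1 hN (show S.size ≤ E by omega) (show N ≤ E by omega) h3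
        (hN1 m h1) hgap (le_of_lt hγ0) (le_of_lt hcs0) (hN2 m h2) hδ (le_of_lt hδ0)
      calc qq S (m+1) ≤ β * (1-δ) := this
        _ = (1-δ)^(i+1) := by rw [hβ]; ring
  -- conclude
  rw [Metric.tendsto_atTop]
  intro ε hε
  have hpow : Tendsto (fun i : ℕ => (1-δ)^i) atTop (𝓝 0) := by
    apply tendsto_pow_atTop_nhds_zero_of_lt_one (by linarith) (by linarith)
  obtain ⟨i, hi⟩ := (hpow.eventually (eventually_lt_nhds hε)).exists
  obtain ⟨N, hN⟩ := main i
  refine ⟨N, fun n hn => ?_⟩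
  rw [Real.dist_eq, sub_zero, abs_of_nonneg (qq_nonneg S n)]
  exact lt_of_le_of_lt (hN n hn) hi

theorem density_tendsto_one (L : Set (BTree α)) (S : BTree α)
    (hS : ∀ T : BTree α, BTree.Subtree S T → T ∈ L) :
    Tendsto (density L) atTop (𝓝 1) := by
  have hlow : ∀ n, 1 - qq S n ≤ density L n := by
    intro n
    rw [density_eq_one_sub]
    have hmono : Nat.card (SzP (fun T : BTree α => T ∉ L) n)
        ≤ Nat.card (SzP (fun T : BTree α => ¬ BTree.Subtree S T) n) := by
      haveI : ∀ (P : BTree α → Prop) (m : ℕ), Finite (SzP P m) := finite_szP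
      refine Nat.card_le_card_of_injective
        (fun x => ⟨x.val, fun hsub => x.2.1 (hS _ hsub), x.2.2⟩) ?_
      rintro ⟨T, hT⟩ ⟨T', hT'⟩ e
      exact Subtype.ext (by simpa only [Subtype.mk.injEq] using e)
    have hb := bR_pos (α := α) n
    have : (Nat.card (SzP (fun T : BTree α => T ∉ L) n) : ℝ)
        ≤ (Nat.card (SzP (fun T : BTree α => ¬ BTree.Subtree S T) n) : ℝ) := by
      exact_mod_cast hmono
    unfold qq
    have hdiv := mul_le_mul_of_nonneg_right this (one_div_nonneg.mpr hb.le)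
    refine sub_le_sub_left ?_ 1
    exact le_trans (le_of_eq (div_eq_mul_one_div _ _))
      (le_trans hdiv (le_of_eq (div_eq_mul_one_div _ _).symm))
  have hup : ∀ n, density L n ≤ 1 := density_le_one L
  have h1 : Tendsto (fun n => 1 - qq S n) atTop (𝓝 1) := by
    have := (qq_tendsto_zero S).const_sub 1
    simpa using this
  exact tendsto_of_tendsto_of_tendsto_of_le_of_le h1 tendsto_const_nhds hlow hup

end PartB4

/-- A regular tree language has asymptotic density 1 iff there is a tree `S`
such that every tree containing `S` as a subtree belongs to `L`. -/
theorem density_one_regular_tree_iff {α : Type*} [Fintype α] [Nonempty α]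
    (L : Set (BTree α)) (hL : RegularTreeLang L) :
    HasDensity L 1 ↔ ∃ S : BTree α, ∀ T : BTree α, BTree.Subtree S T → T ∈ L := by
  constructor
  · intro h1
    have h1' : Tendsto (density L) atTop (𝓝 1) := h1
    by_contra hno
    push_neg at hno
    obtain ⟨Q, hQ, Δ, F, rfl⟩ := hL
    haveI : Fintype Q := hQ
    obtain ⟨M, ε, hε, hfar⟩ := exists_low_density Δ F (fun S => by
      obtain ⟨T, ht1, ht2⟩ := hno S
      exact ⟨T, ht1, ht2⟩)
    have hev := h1'.eventually (eventually_gt_nhds (show 1 - ε < 1 by linarith))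
    rw [eventually_atTop] at hev
    obtain ⟨n₀, hn₀⟩ := hev
    obtain ⟨N, hN1, hN2, hN3⟩ := hfar n₀
    exact absurd (hn₀ N hN1) (not_lt.mpr hN3)
  · rintro ⟨S, hS⟩
    exact density_tendsto_one L S hS

end Sparse
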